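/- Let X and Y be real Banach spaces, A : X → Y a bounded linear operator, and let p and q be norms on Y, each equivalent to the original norm of Y. Let p* and q* denote the corresponding dual norms on Y*, p*(y*) = sup{|y*(y)| : p(y) ≤ 1}. If for every ε > 0 there exists δ > 0 such that whenever y* ∈ Y* with p*(y*) ≤ 1 and S ⊆ {z* : p*(z*) ≤ 1} satisfy y* ∈ w*-closure(S) and ‖A* u* − A* y*‖ ≥ ε for all u* ∈ S, then p*(y*) ≤ 1 − δ; then the same property holds with p* replaced everywhere by the norm p* + q*. (In the paper's terminology: if A* : (Y*, p*) → X* is w*-AUC, then A* : (Y*, p* + q*) → X* is w*-AUC.) -/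

import Mathlib

set_option maxHeartbeats 1000000


open Filter Topology Pointwise NormedSpace

noncomputable section

variable {X Y : Type*} [NormedAddCommGroup X] [NormedSpace ℝ X] [CompleteSpace X]
  [NormedAddCommGroup Y] [NormedSpace ℝ Y] [CompleteSpace Y]

/-- The adjoint `A* : Y* → X*` of a bounded linear operator, `(A* g)(x) = g (A x)`. -/
def opAdjoint (A : X →L[ℝ] Y) : StrongDual ℝ Y →L[ℝ] StrongDual ℝ X :=
  (ContinuousLinearMap.compSL X Y ℝ (RingHom.id ℝ) (RingHom.id ℝ)).flip A

/-- `g` belongs to the weak-star closure of `S` (closure in `σ(E*, E)`). -/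
def MemWeakStarClosure {E : Type*} [NormedAddCommGroup E] [NormedSpace ℝ E]
    (g : StrongDual ℝ E) (S : Set (StrongDual ℝ E)) : Prop :=
  StrongDual.toWeakDual g ∈ closure (StrongDual.toWeakDual '' S)

/-- `r` is a norm on `E` that is `C`-equivalent to the original norm:
`C⁻¹‖u‖ ≤ r u ≤ C‖u‖`. -/
def IsEquivNorm {E : Type*} [NormedAddCommGroup E] [NormedSpace ℝ E]
    (C : ℝ) (r : E → ℝ) : Prop :=
  (∀ u v : E, r (u + v) ≤ r u + r v) ∧ (∀ (a : ℝ) (u : E), r (a • u) = |a| * r u) ∧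
    ∀ u : E, C⁻¹ * ‖u‖ ≤ r u ∧ r u ≤ C * ‖u‖

/-- if the adjoint `A* : (Y*, p*) → X*` is w*-AUC (in the separated
family formulation) then so is `A* : (Y*, p* + q*) → X*`, where `p, q` are equivalent
norms on `Y` and `p*, q*` are the corresponding dual norms. -/
theorem statement6 (A : X →L[ℝ] Y) (p q : Y → ℝ) (Cp Cq : ℝ)
    (hCp : 1 ≤ Cp) (hCq : 1 ≤ Cq)
    (hp : IsEquivNorm Cp p) (hq : IsEquivNorm Cq q)
    (pd qd : StrongDual ℝ Y → ℝ)
    (hpd : ∀ g : StrongDual ℝ Y, IsLUB {a : ℝ | ∃ y : Y, p y ≤ 1 ∧ a = |g y|} (pd g))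
    (hqd : ∀ g : StrongDual ℝ Y, IsLUB {a : ℝ | ∃ y : Y, q y ≤ 1 ∧ a = |g y|} (qd g))
    (H : ∀ ε : ℝ, 0 < ε → ∃ δ : ℝ, 0 < δ ∧
      ∀ g : StrongDual ℝ Y, pd g ≤ 1 → ∀ S : Set (StrongDual ℝ Y), (∀ u ∈ S, pd u ≤ 1) →
        MemWeakStarClosure g S →
        (∀ u ∈ S, ε ≤ ‖opAdjoint A u - opAdjoint A g‖) → pd g ≤ 1 - δ) :
    ∀ ε : ℝ, 0 < ε → ∃ δ : ℝ, 0 < δ ∧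
      ∀ g : StrongDual ℝ Y, pd g + qd g ≤ 1 →
        ∀ S : Set (StrongDual ℝ Y), (∀ u ∈ S, pd u + qd u ≤ 1) →
        MemWeakStarClosure g S →
        (∀ u ∈ S, ε ≤ ‖opAdjoint A u - opAdjoint A g‖) → pd g + qd g ≤ 1 - δ := by
  classical
  intro ε hε
  obtain ⟨δ', hδ'pos, hH⟩ := H (ε / 2) (by positivity)
  have hCp0 : (0:ℝ) < Cp := lt_of_lt_of_le one_pos hCp
  set M : ℝ := (‖A‖ + 1) * Cp with hMdef
  have hM0 : 0 < M := by positivity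
  set m : ℝ := min 1 (ε / (4 * M)) with hmdef
  have hm0 : 0 < m := lt_min one_pos (by positivity)
  have hm1 : m ≤ 1 := min_le_left _ _
  have hmε : 4 * M * m ≤ ε := by
    have h1 : m ≤ ε / (4 * M) := min_le_right _ _
    have h2 : 4 * M * (ε / (4 * M)) = ε := by field_simp
    nlinarith
  set δ : ℝ := min m (δ' * m / 2) with hδdef
  have hδ0 : 0 < δ := lt_min hm0 (by positivity)
  have hδm : δ ≤ m := min_le_left _ _
  have hδ2 : 2 * δ ≤ δ' * m := by
    have := min_le_right m (δ' * m / 2); linarith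
  refine ⟨δ, hδ0, ?_⟩
  intro g hg S hS hcl hsep
  -- basic facts about the dual norms
  have hp0 : p 0 = 0 := by have := hp.2.1 0 0; simpa using this
  have hq0 : q 0 = 0 := by have := hq.2.1 0 0; simpa using this
  have pd_nonneg : ∀ u : StrongDual ℝ Y, 0 ≤ pd u := fun u =>
    (hpd u).1 ⟨0, by simp [hp0], by simp⟩
  have qd_nonneg : ∀ u : StrongDual ℝ Y, 0 ≤ qd u := fun u =>
    (hqd u).1 ⟨0, by simp [hq0], by simp⟩
  have norm_le_pd : ∀ u : StrongDual ℝ Y, ‖u‖ ≤ Cp * pd u := by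
    intro u
    refine ContinuousLinearMap.opNorm_le_bound u (mul_nonneg hCp0.le (pd_nonneg u)) ?_
    intro y
    rcases eq_or_ne y 0 with rfl | hy
    · simp
    · have hyn : 0 < ‖y‖ := norm_pos_iff.mpr hy
      have hpos : (0:ℝ) < Cp * ‖y‖ := by positivity
      have hmem : |u ((Cp * ‖y‖)⁻¹ • y)| ≤ pd u := by
        refine (hpd u).1 ⟨(Cp * ‖y‖)⁻¹ • y, ?_, rfl⟩
        rw [hp.2.1, abs_of_nonneg (by positivity : (0:ℝ) ≤ (Cp * ‖y‖)⁻¹)]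
        have hpy := (hp.2.2 y).2
        calc (Cp * ‖y‖)⁻¹ * p y ≤ (Cp * ‖y‖)⁻¹ * (Cp * ‖y‖) :=
              mul_le_mul_of_nonneg_left hpy (by positivity)
          _ = 1 := inv_mul_cancel₀ hpos.ne'
      have heval : u ((Cp * ‖y‖)⁻¹ • y) = (Cp * ‖y‖)⁻¹ * u y := by
        rw [map_smul]; rfl
      rw [heval, abs_mul, abs_of_nonneg (by positivity : (0:ℝ) ≤ (Cp * ‖y‖)⁻¹)] at hmem
      have h2 := mul_le_mul_of_nonneg_left hmem hpos.le
      rw [← mul_assoc, mul_inv_cancel₀ hpos.ne', one_mul] at h2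
      rw [Real.norm_eq_abs]
      nlinarith
  have pd_smul : ∀ (c : ℝ), 0 < c → ∀ u : StrongDual ℝ Y, pd (c • u) = c * pd u := by
    intro c hc u
    refine (hpd (c • u)).unique ?_
    constructor
    · rintro a ⟨y, hy, rfl⟩
      have hval : |(c • u) y| = c * |u y| := by
        rw [ContinuousLinearMap.smul_apply, smul_eq_mul, abs_mul, abs_of_pos hc]
      rw [hval]
      exact mul_le_mul_of_nonneg_left ((hpd u).1 ⟨y, hy, rfl⟩) hc.le
    · intro b hb
      have hub : pd u ≤ c⁻¹ * b := by
        refine (hpd u).2 ?_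
        rintro a ⟨y, hy, rfl⟩
        have h1 : c * |u y| ≤ b := by
          refine hb ⟨y, hy, ?_⟩
          rw [ContinuousLinearMap.smul_apply, smul_eq_mul, abs_mul, abs_of_pos hc]
        have h2 := mul_le_mul_of_nonneg_left h1 (inv_pos.mpr hc).le
        rwa [← mul_assoc, inv_mul_cancel₀ hc.ne', one_mul] at h2
      have h3 := mul_le_mul_of_nonneg_left hub hc.le
      rwa [← mul_assoc, mul_inv_cancel₀ hc.ne', one_mul] at h3
  have hpg0 := pd_nonneg g
  have hqg0 := qd_nonneg g
  -- find a witness vector making qd weak-star lower semicontinuous at g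
  obtain ⟨a₀, ⟨y₀, hy₀q, rfl⟩, hgy₀, -⟩ :=
    (hqd g).exists_between (show qd g - δ < qd g by linarith)
  set V : Set (WeakDual ℝ Y) := {φ | qd g - δ < |φ y₀|} with hV
  have hVopen : IsOpen V :=
    isOpen_lt continuous_const (continuous_abs.comp (WeakDual.eval_continuous y₀))
  set S' : Set (StrongDual ℝ Y) := {u ∈ S | qd g - δ < |u y₀|} with hS'def
  have himg : StrongDual.toWeakDual '' S' = V ∩ (StrongDual.toWeakDual '' S) := by
    ext φ
    constructor
    · rintro ⟨u, ⟨huS, hu⟩, rfl⟩; exact ⟨hu, ⟨u, huS, rfl⟩⟩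
    · rintro ⟨hu, ⟨u, huS, rfl⟩⟩; exact ⟨u, ⟨huS, hu⟩, rfl⟩
  have hcl' : StrongDual.toWeakDual g ∈ closure (StrongDual.toWeakDual '' S') := by
    rw [himg]
    exact hVopen.inter_closure ⟨hgy₀, hcl⟩
  obtain ⟨u₀, hu₀⟩ : S'.Nonempty := by
    by_contra h
    rw [Set.not_nonempty_iff_eq_empty] at h
    rw [h] at hcl'
    simp at hcl'
  have hS'qd : ∀ u ∈ S', qd g - δ < qd u := fun u hu =>
    lt_of_lt_of_le hu.2 ((hqd u).1 ⟨y₀, hy₀q, rfl⟩)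
  have hS'pd : ∀ u ∈ S', pd u ≤ 1 - qd g + δ := by
    intro u hu
    have h1 := hS u hu.1
    have h2 := hS'qd u hu
    linarith
  -- lower bound on 1 - qd g coming from the separation
  have hkey : m ≤ 1 - qd g := by
    have hsep0 := hsep u₀ hu₀.1
    have hb : ‖opAdjoint A u₀ - opAdjoint A g‖ ≤ ‖A‖ * (‖u₀‖ + ‖g‖) := by
      have he : opAdjoint A u₀ - opAdjoint A g = (u₀ - g).comp A := rfl
      rw [he]
      calc ‖(u₀ - g).comp A‖ ≤ ‖u₀ - g‖ * ‖A‖ := ContinuousLinearMap.opNorm_comp_le _ _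
        _ ≤ (‖u₀‖ + ‖g‖) * ‖A‖ :=
            mul_le_mul_of_nonneg_right (norm_sub_le u₀ g) (norm_nonneg A)
        _ = ‖A‖ * (‖u₀‖ + ‖g‖) := by ring
    have h1 : ‖u₀‖ ≤ Cp * pd u₀ := norm_le_pd u₀
    have h2 : ‖g‖ ≤ Cp * pd g := norm_le_pd g
    have h3 : pd u₀ ≤ 1 - qd g + δ := hS'pd u₀ hu₀
    have h4 : pd g ≤ 1 - qd g := by linarith
    have hA0 : (0:ℝ) ≤ ‖A‖ := norm_nonneg A
    have h5 : ε ≤ (‖A‖ + 1) * (‖u₀‖ + ‖g‖) := by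
      have := mul_le_mul_of_nonneg_right (show ‖A‖ ≤ ‖A‖ + 1 by linarith)
        (by positivity : (0:ℝ) ≤ ‖u₀‖ + ‖g‖)
      linarith
    have h6a : ‖u₀‖ + ‖g‖ ≤ Cp * (pd u₀ + pd g) := by rw [mul_add]; linarith
    have h6 : (‖A‖ + 1) * (‖u₀‖ + ‖g‖) ≤ M * (pd u₀ + pd g) := by
      have := mul_le_mul_of_nonneg_left h6a (by linarith : (0:ℝ) ≤ ‖A‖ + 1)
      have hre : (‖A‖ + 1) * (Cp * (pd u₀ + pd g)) = M * (pd u₀ + pd g) := by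
        rw [hMdef]; ring
      linarith
    have h7 : M * (pd u₀ + pd g) ≤ M * (2 * (1 - qd g) + δ) :=
      mul_le_mul_of_nonneg_left (by linarith) hM0.le
    have h8a : M * (4 * m) ≤ M * (2 * (1 - qd g) + δ) := by
      have : M * (4 * m) = 4 * M * m := by ring
      linarith
    have h8 : 4 * m ≤ 2 * (1 - qd g) + δ := le_of_mul_le_mul_left h8a hM0
    linarith
  set c : ℝ := 1 - qd g + δ with hcdef
  have hc0 : 0 < c := by linarith
  have hcm : m ≤ c := by linarith
  have hc2 : c ≤ 2 := by linarith
  have hpgc : pd g ≤ c := by linarith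
  have hinvc : (0:ℝ) < c⁻¹ := inv_pos.mpr hc0
  set g' : StrongDual ℝ Y := c⁻¹ • g with hg'def
  set T : Set (StrongDual ℝ Y) := (fun u => c⁻¹ • u) '' S' with hTdef
  have hgoal' : pd g' ≤ 1 - δ' := by
    refine hH g' ?_ T ?_ ?_ ?_
    · rw [hg'def, pd_smul c⁻¹ hinvc g]
      have h := mul_le_mul_of_nonneg_left hpgc hinvc.le
      rwa [inv_mul_cancel₀ hc0.ne'] at h
    · rintro u' ⟨u, hu, rfl⟩
      rw [pd_smul c⁻¹ hinvc u]
      have h1 : pd u ≤ c := hS'pd u hu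
      have h := mul_le_mul_of_nonneg_left h1 hinvc.le
      rwa [inv_mul_cancel₀ hc0.ne'] at h
    · show StrongDual.toWeakDual g' ∈ closure (StrongDual.toWeakDual '' T)
      have hcont : Continuous fun φ : WeakDual ℝ Y => c⁻¹ • φ := continuous_const_smul _
      have himg2 : StrongDual.toWeakDual '' T
          = (fun φ : WeakDual ℝ Y => c⁻¹ • φ) '' (StrongDual.toWeakDual '' S') := by
        rw [hTdef, Set.image_image, Set.image_image]
        exact Set.image_congr' (fun u => map_smul StrongDual.toWeakDual c⁻¹ u)
      rw [himg2]
      have hsub := image_closure_subset_closure_image (s := StrongDual.toWeakDual '' S') hcont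
      exact hsub ⟨_, hcl', rfl⟩
    · rintro u' ⟨u, hu, rfl⟩
      have h1 := hsep u hu.1
      have h2 : opAdjoint A (c⁻¹ • u) - opAdjoint A g'
          = c⁻¹ • (opAdjoint A u - opAdjoint A g) := by
        rw [hg'def, map_smul, map_smul]; exact (smul_sub c⁻¹ _ _).symm
      rw [h2, norm_smul, Real.norm_eq_abs, abs_of_pos hinvc]
      have hhalf : 1 / (2:ℝ) ≤ 1 / c := one_div_le_one_div_of_le hc0 hc2
      calc ε / 2 = 1 / 2 * ε := by ring
        _ ≤ 1 / c * ε := mul_le_mul_of_nonneg_right hhalf hε.le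
        _ ≤ 1 / c * ‖opAdjoint A u - opAdjoint A g‖ :=
            mul_le_mul_of_nonneg_left h1 (by positivity)
        _ = c⁻¹ * ‖opAdjoint A u - opAdjoint A g‖ := by rw [one_div]
  have hfin : pd g ≤ c * (1 - δ') := by
    rw [hg'def, pd_smul c⁻¹ hinvc g] at hgoal'
    have h := mul_le_mul_of_nonneg_left hgoal' hc0.le
    rwa [← mul_assoc, mul_inv_cancel₀ hc0.ne', one_mul] at h
  have hfin2 : pd g ≤ c - δ' * c := by
    have : c * (1 - δ') = c - δ' * c := by ring
    linarith
  have hδc : δ' * m ≤ δ' * c := mul_le_mul_of_nonneg_left hcm hδ'pos.le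
  linarith
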